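/- Let H be a real Hilbert space, p > 1, and let ℓ' : ℝ → ℝ be given by a power series ℓ'(a) = Σ_{n=0}^∞ γ_n a^n, with ℓ'₊(a) := Σ_{n=0}^∞ |γ_n| a^n. Let y ∈ {−1, +1}, let w ∈ H with ‖w‖² ≤ B_w, and on a probability space let N be a random variable taking values in the nonnegative integers with P(N = n) = (p−1)/p^{n+1} for every n ∈ ℕ, and let (Φ_j)_{j≥1} be i.i.d. H-valued random vectors, independent of N, with E[‖Φ_1‖²] ≤ B_Ψ, where ℓ'₊(√(p·B_w·B_Ψ)) < ∞. Define g̃ := y · γ_N · (p^{N+1}/(p−1)) · ∏_{j=1}^N (y·⟨w, Φ_j⟩). Then E[g̃²] ≤ (p/(p−1)) · ℓ'₊(√(p·B_w·B_Ψ))². -/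

import Mathlib

open MeasureTheory ProbabilityTheory
open scoped ENNReal RealInnerProductSpace

/-- **Lemma 2 (second-moment bound for `Grad_Length_Estimate`).** Fix `p > 1` and a
power series `ℓ'(a) = Σ γ_n aⁿ` with `ℓ'₊(a) = Σ |γ_n| aⁿ`. Let `y ∈ {-1, +1}`, `w`
in a real Hilbert space with `‖w‖² ≤ B_w`, `N` geometric with parameter `p`, and
`(Φ_j)` i.i.d. `H`-valued random vectors independent of `N` with `E[‖Φ₁‖²] ≤ B_Ψ`
and `ℓ'₊(√(p·B_w·B_Ψ)) < ∞`. Then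
`g̃ = y · γ_N · (p^(N+1)/(p-1)) · ∏_{j=1}^N (y·⟨w, Φ_j⟩)` satisfies
`E[g̃²] ≤ (p/(p-1)) · ℓ'₊(√(p·B_w·B_Ψ))²`. -/
theorem grad_length_estimate_second_moment
    {Ω : Type*} [MeasurableSpace Ω] (μ : Measure Ω) [IsProbabilityMeasure μ]
    {H : Type*} [NormedAddCommGroup H] [InnerProductSpace ℝ H] [CompleteSpace H]
    [MeasurableSpace H] [BorelSpace H]
    (p : ℝ) (hp : 1 < p)
    (γ : ℕ → ℝ)
    (y : ℝ) (hy : y = 1 ∨ y = -1)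
    (w : H) (Bw : ℝ) (hw : ‖w‖ ^ 2 ≤ Bw)
    (N : Ω → ℕ) (hN : Measurable N)
    (hNdist : ∀ n : ℕ, μ {ω | N ω = n} = ENNReal.ofReal ((p - 1) / p ^ (n + 1)))
    (Φ : ℕ → Ω → H) (hΦm : ∀ j, Measurable (Φ j))
    (hΦindep : iIndepFun Φ μ)
    (hΦid : ∀ j, μ.map (Φ j) = μ.map (Φ 0))
    (hNΦ : IndepFun N (fun ω => fun j => Φ j ω) μ)
    (BΨ : ℝ) (hΦsq : Integrable (fun ω => ‖Φ 0 ω‖ ^ 2) μ)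
    (hΦ2 : ∫ ω, ‖Φ 0 ω‖ ^ 2 ∂μ ≤ BΨ)
    (hplus : Summable (fun n : ℕ => |γ n| * Real.sqrt (p * Bw * BΨ) ^ n)) :
    ∫⁻ ω, ENNReal.ofReal
        ((y * γ (N ω) * (p ^ (N ω + 1) / (p - 1)) *
          ∏ j ∈ Finset.range (N ω), (y * ⟪w, Φ j ω⟫)) ^ 2) ∂μ
      ≤ ENNReal.ofReal ((p / (p - 1)) *
          (∑' n : ℕ, |γ n| * Real.sqrt (p * Bw * BΨ) ^ n) ^ 2) := by
  classical
  have hp0 : (0:ℝ) < p := lt_trans one_pos hp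
  have hp1 : (0:ℝ) < p - 1 := by linarith
  have hBw : (0:ℝ) ≤ Bw := le_trans (sq_nonneg _) hw
  have hBΨ : (0:ℝ) ≤ BΨ :=
    le_trans (integral_nonneg fun ω => sq_nonneg _) hΦ2
  set s : ℝ := Real.sqrt (p * Bw * BΨ) with hs
  have hs0 : 0 ≤ s := Real.sqrt_nonneg _
  -- the ℝ≥0∞-valued factors
  set X : ℕ → Ω → ℝ≥0∞ := fun j ω => ENNReal.ofReal (⟪w, Φ j ω⟫ ^ 2) with hX
  have hginner : Measurable fun x : H => ENNReal.ofReal (⟪w, x⟫ ^ 2) :=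
    ((((continuous_const.inner continuous_id).measurable : Measurable fun x : H => ⟪w, x⟫).pow_const 2)).ennreal_ofReal
  have hXm : ∀ j, Measurable (X j) := fun j => hginner.comp (hΦm j)
  have hXindep : iIndepFun X μ :=
    hΦindep.comp (fun _ => fun x => ENNReal.ofReal (⟪w, x⟫ ^ 2)) (fun _ => hginner)
  have hy2 : y ^ 2 = 1 := by rcases hy with h | h <;> simp [h]
  -- constants
  set C : ℕ → ℝ := fun n => (γ n * (p ^ (n + 1) / (p - 1))) ^ 2 with hC
  have hCnn : ∀ n, 0 ≤ C n := fun n => sq_nonneg _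
  -- pointwise identity for the integrand
  have hpt : ∀ ω, ENNReal.ofReal
      ((y * γ (N ω) * (p ^ (N ω + 1) / (p - 1)) *
        ∏ j ∈ Finset.range (N ω), (y * ⟪w, Φ j ω⟫)) ^ 2)
      = ENNReal.ofReal (C (N ω)) * ∏ j ∈ Finset.range (N ω), X j ω := by
    intro ω
    have h1 : (y * γ (N ω) * (p ^ (N ω + 1) / (p - 1)) *
        ∏ j ∈ Finset.range (N ω), (y * ⟪w, Φ j ω⟫)) ^ 2
        = C (N ω) * ∏ j ∈ Finset.range (N ω), ⟪w, Φ j ω⟫ ^ 2 := by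
      have hyn : (y ^ N ω) ^ 2 = 1 := by
        rw [← pow_mul, mul_comm, pow_mul, hy2, one_pow]
      calc (y * γ (N ω) * (p ^ (N ω + 1) / (p - 1)) *
            ∏ j ∈ Finset.range (N ω), (y * ⟪w, Φ j ω⟫)) ^ 2
          = y ^ 2 * ((y ^ N ω) ^ 2) * ((γ (N ω) * (p ^ (N ω + 1) / (p - 1))) ^ 2
              * (∏ j ∈ Finset.range (N ω), ⟪w, Φ j ω⟫) ^ 2) := by
            rw [Finset.prod_mul_distrib, Finset.prod_const, Finset.card_range]; ring
        _ = C (N ω) * ∏ j ∈ Finset.range (N ω), ⟪w, Φ j ω⟫ ^ 2 := by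
            rw [hy2, hyn, one_mul, one_mul, ← Finset.prod_pow]
    rw [h1, ENNReal.ofReal_mul (hCnn _),
      ENNReal.ofReal_prod_of_nonneg (fun i _ => sq_nonneg _)]
  -- key bound on each factor's integral
  have hXle : ∀ j, ∫⁻ ω, X j ω ∂μ ≤ ENNReal.ofReal (Bw * BΨ) := by
    intro j
    have hmap : ∫⁻ ω, X j ω ∂μ = ∫⁻ ω, X 0 ω ∂μ := by
      rw [hX]
      calc ∫⁻ ω, ENNReal.ofReal (⟪w, Φ j ω⟫ ^ 2) ∂μ
          = ∫⁻ x, ENNReal.ofReal (⟪w, x⟫ ^ 2) ∂(μ.map (Φ j)) :=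
            (lintegral_map hginner (hΦm j)).symm
        _ = ∫⁻ x, ENNReal.ofReal (⟪w, x⟫ ^ 2) ∂(μ.map (Φ 0)) := by rw [hΦid j]
        _ = ∫⁻ ω, ENNReal.ofReal (⟪w, Φ 0 ω⟫ ^ 2) ∂μ := lintegral_map hginner (hΦm 0)
    rw [hmap]
    have hptb : ∀ ω, X 0 ω ≤ ENNReal.ofReal Bw * ENNReal.ofReal (‖Φ 0 ω‖ ^ 2) := by
      intro ω
      rw [← ENNReal.ofReal_mul hBw]
      apply ENNReal.ofReal_le_ofReal
      calc ⟪w, Φ 0 ω⟫ ^ 2 = |⟪w, Φ 0 ω⟫| ^ 2 := (sq_abs _).symm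
        _ ≤ (‖w‖ * ‖Φ 0 ω‖) ^ 2 :=
            pow_le_pow_left₀ (abs_nonneg _) (abs_real_inner_le_norm w _) 2
        _ = ‖w‖ ^ 2 * ‖Φ 0 ω‖ ^ 2 := by ring
        _ ≤ Bw * ‖Φ 0 ω‖ ^ 2 := by
            exact mul_le_mul_of_nonneg_right hw (sq_nonneg _)
    calc ∫⁻ ω, X 0 ω ∂μ ≤ ∫⁻ ω, ENNReal.ofReal Bw * ENNReal.ofReal (‖Φ 0 ω‖ ^ 2) ∂μ :=
          lintegral_mono hptb
      _ = ENNReal.ofReal Bw * ∫⁻ ω, ENNReal.ofReal (‖Φ 0 ω‖ ^ 2) ∂μ := lintegral_const_mul _ ((hΦm 0).norm.pow_const 2).ennreal_ofReal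
      _ = ENNReal.ofReal Bw * ENNReal.ofReal (∫ ω, ‖Φ 0 ω‖ ^ 2 ∂μ) := by
          rw [← ofReal_integral_eq_lintegral_ofReal hΦsq (Filter.Eventually.of_forall fun ω => sq_nonneg _)]
      _ ≤ ENNReal.ofReal Bw * ENNReal.ofReal BΨ := by
          exact mul_le_mul_right (ENNReal.ofReal_le_ofReal hΦ2) _
      _ = ENNReal.ofReal (Bw * BΨ) := (ENNReal.ofReal_mul hBw).symm
  -- product bound by induction
  have hprod : ∀ n, ∫⁻ ω, ∏ j ∈ Finset.range n, X j ω ∂μ ≤ ENNReal.ofReal (Bw * BΨ) ^ n := by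
    intro n
    induction n with
    | zero => simp
    | succ n ih =>
      have hind : IndepFun (fun ω => ∏ j ∈ Finset.range n, X j ω) (X n) μ := by
        have h := hXindep.indepFun_prod_range_succ hXm n
        have heq : (∏ j ∈ Finset.range n, X j) = fun ω => ∏ j ∈ Finset.range n, X j ω :=
          funext fun ω => by simp
        rwa [heq] at h
      have : ∫⁻ ω, ∏ j ∈ Finset.range (n + 1), X j ω ∂μ
          = (∫⁻ ω, ∏ j ∈ Finset.range n, X j ω ∂μ) * ∫⁻ ω, X n ω ∂μ := by
        have heq : (fun ω => ∏ j ∈ Finset.range (n+1), X j ω)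
            = fun ω => (∏ j ∈ Finset.range n, X j ω) * X n ω := by
          funext ω; simp [Finset.prod_range_succ]
        rw [heq]
        exact lintegral_mul_eq_lintegral_mul_lintegral_of_indepFun''
          (Finset.measurable_prod _ fun j _ => hXm j).aemeasurable (hXm n).aemeasurable hind
      rw [this, pow_succ]
      exact mul_le_mul' ih (hXle n)
  -- decompose the integral over the level sets of N
  set F : Ω → ℝ≥0∞ := fun ω => ENNReal.ofReal (C (N ω)) * ∏ j ∈ Finset.range (N ω), X j ω with hF
  have hGm : ∀ n : ℕ, Measurable fun ω => ENNReal.ofReal (C n) * ∏ j ∈ Finset.range n, X j ω :=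
    fun n => (measurable_const.mul (Finset.measurable_prod _ fun j _ => hXm j))
  have hsets : ∀ n : ℕ, MeasurableSet {ω | N ω = n} := fun n => hN (measurableSet_singleton n)
  have hdecomp : ∫⁻ ω, F ω ∂μ = ∑' n : ℕ, ∫⁻ ω in {ω | N ω = n}, F ω ∂μ := by
    have hcover : (⋃ n : ℕ, {ω | N ω = n}) = Set.univ := by
      ext ω; simp
    have hdisj : Pairwise (Function.onFun Disjoint fun n => {ω | N ω = n}) := by
      intro m n hmn
      simp only [Function.onFun, Set.disjoint_left]
      intro ω hm hn; exact hmn (hm.symm.trans hn)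
    rw [← setLIntegral_univ, ← hcover, lintegral_iUnion hsets hdisj]
  -- compute each set integral
  have hterm : ∀ n : ℕ, ∫⁻ ω in {ω | N ω = n}, F ω ∂μ
      ≤ ENNReal.ofReal ((p - 1) / p ^ (n + 1)) * (ENNReal.ofReal (C n) * ENNReal.ofReal (Bw * BΨ) ^ n) := by
    intro n
    have hcongr : ∫⁻ ω in {ω | N ω = n}, F ω ∂μ
        = ∫⁻ ω in {ω | N ω = n}, ENNReal.ofReal (C n) * ∏ j ∈ Finset.range n, X j ω ∂μ := by
      apply setLIntegral_congr_fun (hsets n)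
      exact fun ω (hω : N ω = n) => by simp [hF, hω]
    rw [hcongr]
    -- rewrite as an unconstrained integral of indicator * G
    set I : Ω → ℝ≥0∞ := {ω | N ω = n}.indicator (fun _ => (1:ℝ≥0∞)) with hI
    have hind2 : ∫⁻ ω in {ω | N ω = n}, ENNReal.ofReal (C n) * ∏ j ∈ Finset.range n, X j ω ∂μ
        = ∫⁻ ω, I ω * (ENNReal.ofReal (C n) * ∏ j ∈ Finset.range n, X j ω) ∂μ := by
      rw [← lintegral_indicator (hsets n)]
      congr 1; funext ω
      by_cases hω : N ω = n <;> simp [hI, Set.indicator, hω]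
    rw [hind2]
    have hφN : I = (fun k : ℕ => if k = n then (1:ℝ≥0∞) else 0) ∘ N := by
      funext ω; by_cases hω : N ω = n <;> simp [hI, Set.indicator, hω]
    have hφΦ : (fun ω => ENNReal.ofReal (C n) * ∏ j ∈ Finset.range n, X j ω)
        = (fun v : ℕ → H => ENNReal.ofReal (C n) * ∏ j ∈ Finset.range n,
            ENNReal.ofReal (⟪w, v j⟫ ^ 2)) ∘ (fun ω => fun j => Φ j ω) := by
      funext ω; simp [hX]
    have hindep2 : IndepFun I
        (fun ω => ENNReal.ofReal (C n) * ∏ j ∈ Finset.range n, X j ω) μ := by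
      rw [hφN, hφΦ]
      exact hNΦ.comp measurable_from_nat
        (measurable_const.mul (Finset.measurable_prod _ fun j _ =>
          (hginner.comp (measurable_pi_apply j))))
    have hImeas : Measurable I := measurable_one.indicator (hsets n)
    have := lintegral_mul_eq_lintegral_mul_lintegral_of_indepFun''
      hImeas.aemeasurable (hGm n).aemeasurable hindep2
    have hIint : ∫⁻ ω, I ω ∂μ = ENNReal.ofReal ((p - 1) / p ^ (n + 1)) := by
      rw [hI, lintegral_indicator (hsets n)]
      simpa using hNdist n
    rw [this, hIint]
    rw [lintegral_const_mul _ (Finset.measurable_prod _ fun j _ => hXm j)]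
    exact mul_le_mul_right (mul_le_mul_right (hprod n) _) _
  -- arithmetic: each term equals (p/(p-1)) * (|γ n| s^n)^2
  have hterm2 : ∀ n : ℕ, ENNReal.ofReal ((p - 1) / p ^ (n + 1))
      * (ENNReal.ofReal (C n) * ENNReal.ofReal (Bw * BΨ) ^ n)
      = ENNReal.ofReal (p / (p - 1)) * ENNReal.ofReal ((|γ n| * s ^ n) ^ 2) := by
    intro n
    rw [← ENNReal.ofReal_pow (by positivity), ← ENNReal.ofReal_mul (hCnn n),
      ← ENNReal.ofReal_mul (by positivity), ← ENNReal.ofReal_mul (by positivity)]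
    congr 1
    have hsq : s ^ 2 = p * Bw * BΨ := Real.sq_sqrt (by positivity)
    have hppow : (0:ℝ) < p ^ (n+1) := pow_pos hp0 _
    have h1 : (|γ n| * s ^ n) ^ 2 = γ n ^ 2 * (p * Bw * BΨ) ^ n := by
      rw [mul_pow, ← pow_mul, mul_comm n 2, pow_mul, hsq, sq_abs]
    rw [h1, hC]
    field_simp
    ring
  -- finish: sum the bounds
  calc ∫⁻ ω, ENNReal.ofReal
        ((y * γ (N ω) * (p ^ (N ω + 1) / (p - 1)) *
          ∏ j ∈ Finset.range (N ω), (y * ⟪w, Φ j ω⟫)) ^ 2) ∂μ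
      = ∫⁻ ω, F ω ∂μ := by
        apply lintegral_congr; intro ω; exact hpt ω
    _ = ∑' n : ℕ, ∫⁻ ω in {ω | N ω = n}, F ω ∂μ := hdecomp
    _ ≤ ∑' n : ℕ, ENNReal.ofReal (p / (p - 1)) * ENNReal.ofReal ((|γ n| * s ^ n) ^ 2) := by
        apply ENNReal.tsum_le_tsum; intro n
        exact le_of_le_of_eq (hterm n) (hterm2 n)
    _ = ENNReal.ofReal (p / (p - 1)) * ∑' n : ℕ, ENNReal.ofReal ((|γ n| * s ^ n) ^ 2) :=
        ENNReal.tsum_mul_left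
    _ ≤ ENNReal.ofReal (p / (p - 1)) *
        (ENNReal.ofReal (∑' n : ℕ, |γ n| * s ^ n) * ENNReal.ofReal (∑' n : ℕ, |γ n| * s ^ n)) := by
        apply mul_le_mul_right
        have hann : ∀ n : ℕ, (0:ℝ) ≤ |γ n| * s ^ n := fun n => by positivity
        have hle : ∀ n : ℕ, ENNReal.ofReal ((|γ n| * s ^ n) ^ 2)
            ≤ ENNReal.ofReal (|γ n| * s ^ n) * ENNReal.ofReal (∑' m : ℕ, |γ m| * s ^ m) := by
          intro n
          rw [← ENNReal.ofReal_mul (hann n)]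
          apply ENNReal.ofReal_le_ofReal
          rw [sq]
          exact mul_le_mul_of_nonneg_left (Summable.le_tsum hplus n fun m _ => hann m) (hann n)
        calc ∑' n : ℕ, ENNReal.ofReal ((|γ n| * s ^ n) ^ 2)
            ≤ ∑' n : ℕ, ENNReal.ofReal (|γ n| * s ^ n) * ENNReal.ofReal (∑' m : ℕ, |γ m| * s ^ m) :=
              ENNReal.tsum_le_tsum hle
          _ = (∑' n : ℕ, ENNReal.ofReal (|γ n| * s ^ n)) * ENNReal.ofReal (∑' m : ℕ, |γ m| * s ^ m) :=
              ENNReal.tsum_mul_right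
          _ = ENNReal.ofReal (∑' n : ℕ, |γ n| * s ^ n) * ENNReal.ofReal (∑' m : ℕ, |γ m| * s ^ m) := by
              rw [← ENNReal.ofReal_tsum_of_nonneg hann hplus]
    _ = ENNReal.ofReal ((p / (p - 1)) * (∑' n : ℕ, |γ n| * s ^ n) ^ 2) := by
        have hS : (0:ℝ) ≤ ∑' n : ℕ, |γ n| * s ^ n := tsum_nonneg fun n => by positivity
        rw [← ENNReal.ofReal_mul hS, ← ENNReal.ofReal_mul (div_nonneg hp0.le hp1.le)]
        congr 1; ring
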